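/- Assume the θ-setup and additionally that 3 divides N. (a) If 3 divides D and A·(C/N) ≡ 1 (mod 3), then 3 divides Θ and 3 divides B. (b) If D ≡ 1 (mod 3) and A·(C/N) ≡ 2 (mod 3), then 3 divides Θ and 3 does not divide B. -/

import Mathlib

/-- The odd part of an integer: for `n ≠ 0`, `n = 2 ^ (padicValInt 2 n) * oddPart n`. -/
def oddPart (n : ℤ) : ℤ := n / 2 ^ (padicValInt 2 n)

private lemma dvd3_iff (x : ℤ) : 3 ∣ x ↔ ((x : ZMod 3) = 0) := by
  simpa using (ZMod.intCast_zmod_eq_zero_iff_dvd x 3).symm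

private lemma modeq3_iff (x y : ℤ) : x ≡ y [ZMOD 3] ↔ ((x : ZMod 3) = (y : ZMod 3)) := by
  simpa using (ZMod.intCast_eq_intCast_iff x y 3).symm

private lemma zmod3_key : ∀ a v B A p k : ZMod 3, A ≠ 0 → p ≠ 0 →
    a * (p * a - v * B) = 1 →
    ((B ^ 2 = 0 ∧ A * (p * k) = 1 →
      (0 - 1) * v * ((p * a - v * B) * k +
        A * (a * (1 - (p * a - v * B) ^ 2) - (p * a - v * B))) = 0 ∧ B = 0) ∧
     (B ^ 2 = 1 ∧ A * (p * k) = 2 →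
      (0 - 1) * v * ((p * a - v * B) * k +
        A * (a * (1 - (p * a - v * B) ^ 2) - (p * a - v * B))) = 0 ∧ ¬ B = 0)) := by
  decide

/-- PROP30: in the θ-setup with `3 ∣ N`:
(a) if `3 ∣ D` and `A·(C/N) ≡ 1 (mod 3)` then `3 ∣ Θ` and `3 ∣ B`;
(b) if `D ≡ 1 (mod 3)` and `A·(C/N) ≡ 2 (mod 3)` then `3 ∣ Θ` and `3 ∤ B`. -/
theorem prop30
    (N A B C u v p D Θ : ℤ)
    (hN : 2 ≤ N) (hA : Int.gcd A N = 1) (hv : v ≠ 0)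
    (hp : Prime p) (hp6 : ¬ p ∣ 6 * N)
    (hNC : N ∣ C) (hpC : p ∣ C) (hpu : p ∣ u)
    (hpeq : p = u * (u - v * B) + v ^ 2 * A * C)
    (hD : D = B ^ 2 - 4 * A * C)
    (hΘ : Θ = (N - 1) * v * ((u - v * B) * (C / (N * p)) +
      A * ((u / p) * (1 - (u - v * B) ^ 2) - (u - v * B))))
    (h3N : 3 ∣ N) :
    ((3 ∣ D ∧ A * (C / N) ≡ 1 [ZMOD 3]) → 3 ∣ Θ ∧ 3 ∣ B) ∧
    ((D ≡ 1 [ZMOD 3] ∧ A * (C / N) ≡ 2 [ZMOD 3]) → 3 ∣ Θ ∧ ¬ 3 ∣ B) := by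
  have hp0 : p ≠ 0 := hp.ne_zero
  have hN0 : N ≠ 0 := by omega
  -- 3 does not divide p
  have h3p : ¬ (3 : ℤ) ∣ p := by
    intro h
    apply hp6
    have h3 : (3 : ℕ) ∣ p.natAbs := by
      have := Int.natAbs_dvd_natAbs.mpr h
      simpa using this
    have hpn : Nat.Prime p.natAbs := Int.prime_iff_natAbs_prime.mp hp
    rcases hpn.eq_one_or_self_of_dvd 3 h3 with h' | h'
    · omega
    · have hdp3 : p ∣ 3 := by
        rw [← Int.natAbs_dvd]
        exact h' ▸ dvd_refl _
      exact hdp3.trans ⟨2 * N, by ring⟩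
  -- 3 does not divide A
  have h3A : ¬ (3 : ℤ) ∣ A := by
    intro h
    have : (3 : ℤ) ∣ (Int.gcd A N : ℤ) := Int.dvd_coe_gcd h h3N
    rw [hA] at this
    norm_num at this
  -- p does not divide N
  have hpN : ¬ p ∣ N := fun h => hp6 (h.mul_left 6)
  -- C = N * p * k
  obtain ⟨c₁, hc₁⟩ := hNC
  have hpc₁ : p ∣ c₁ := by
    rcases (hp.dvd_mul.mp (hc₁ ▸ hpC)) with h | h
    · exact absurd h hpN
    · exact h
  obtain ⟨k, hk⟩ := hpc₁
  have hC : C = N * p * k := by rw [hc₁, hk]; ring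
  obtain ⟨a, ha⟩ := hpu
  subst hC ha hD hΘ
  -- key equation
  have hkey : a * (p * a - v * B) + v ^ 2 * A * N * k = 1 := by
    have h2 : p * (a * (p * a - v * B) + v ^ 2 * A * N * k) = p * 1 := by
      rw [mul_one]
      linear_combination -hpeq
    exact mul_left_cancel₀ hp0 h2
  -- compute the divisions
  have hNp : N * p ≠ 0 := mul_ne_zero hN0 hp0
  have e1 : N * p * k / (N * p) = k := Int.mul_ediv_cancel_left _ hNp
  have e2 : N * p * k / N = p * k := by
    rw [mul_assoc]; exact Int.mul_ediv_cancel_left _ hN0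
  have e3 : p * a / p = a := Int.mul_ediv_cancel_left _ hp0
  rw [e1, e2, e3]
  -- move to ZMod 3
  have hNz : (N : ZMod 3) = 0 := by rw [← dvd3_iff]; exact h3N
  have hAz : (A : ZMod 3) ≠ 0 := fun h => h3A ((dvd3_iff A).mpr h)
  have hpz : (p : ZMod 3) ≠ 0 := fun h => h3p ((dvd3_iff p).mpr h)
  have ekey : (a : ZMod 3) * ((p : ZMod 3) * a - (v : ZMod 3) * B) = 1 := by
    have := congrArg (fun x : ℤ => (x : ZMod 3)) hkey
    push_cast at this
    rw [hNz] at this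
    linear_combination this
  simp only [dvd3_iff, modeq3_iff]
  push_cast
  rw [hNz]
  have key := zmod3_key (a : ZMod 3) (v : ZMod 3) (B : ZMod 3) (A : ZMod 3)
      (p : ZMod 3) (k : ZMod 3) hAz hpz ekey
  constructor
  · rintro ⟨h1, h2⟩
    have := key.1 ⟨by linear_combination h1, by linear_combination h2⟩
    exact ⟨by linear_combination this.1, this.2⟩
  · rintro ⟨h1, h2⟩
    have := key.2 ⟨by linear_combination h1, by linear_combination h2⟩
    exact ⟨by linear_combination this.1, this.2⟩
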